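/- (Birgé's lower tail bound for the noncentral chi-square distribution.) Let D ≥ 1 be an integer and let Z₁,…,Z_D be independent real Gaussian random variables with Z_i ~ N(μ_i, 1). Set X = Z₁² + ⋯ + Z_D² and λ = Σ_{i=1}^D μ_i². Then for all c with 0 < c < D + λ, Pr[X ≤ c] ≤ exp(−(D + λ − c)²/(4(D + 2λ))). -/

import Mathlib

open MeasureTheory ProbabilityTheory Real


lemma aux_log_ge (u : ℝ) (hu : 0 ≤ u) : u - u ^ 2 / 2 ≤ Real.log (1 + u) := by
  set f : ℝ → ℝ := fun y => Real.log (1 + y) - y + y ^ 2 / 2 with hf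
  have hderiv : ∀ x : ℝ, 0 ≤ x → HasDerivAt f ((1 + x)⁻¹ - 1 + x) x := by
    intro x hx
    have h1x : (0 : ℝ) < 1 + x := by linarith
    have h1 : HasDerivAt (fun y : ℝ => 1 + y) 1 x := by
      simpa using (hasDerivAt_id x).const_add (1 : ℝ)
    have h2 : HasDerivAt (fun y : ℝ => Real.log (1 + y)) ((1 + x)⁻¹) x := by
      have := (Real.hasDerivAt_log h1x.ne').comp x h1; rw [mul_one] at this; exact this
    have h3 : HasDerivAt (fun y : ℝ => y ^ 2 / 2) x x := by
      simpa using (hasDerivAt_pow 2 x).div_const 2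
    exact (h2.sub (hasDerivAt_id x)).add h3
  have hmono : MonotoneOn f (Set.Ici (0 : ℝ)) := by
    apply monotoneOn_of_deriv_nonneg (convex_Ici 0)
    · intro x hx
      exact (hderiv x hx).continuousAt.continuousWithinAt
    · intro x hx
      rw [interior_Ici] at hx
      exact (hderiv x (le_of_lt hx)).differentiableAt.differentiableWithinAt
    · intro x hx
      rw [interior_Ici] at hx
      rw [(hderiv x (le_of_lt hx)).deriv]
      have h1x : (0 : ℝ) < 1 + x := by linarith [(Set.mem_Ioi.mp hx).le]
      have : (1 + x)⁻¹ - 1 + x = x ^ 2 / (1 + x) := by field_simp; ring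
      rw [this]; positivity
  have h0 : f 0 ≤ f u := hmono (Set.self_mem_Ici) hu hu
  simp only [hf] at h0
  norm_num at h0
  linarith

lemma aux_exp_le (u : ℝ) (hu : 0 ≤ u) : Real.exp (u - u ^ 2 / 2) ≤ 1 + u :=
  calc Real.exp (u - u ^ 2 / 2) ≤ Real.exp (Real.log (1 + u)) :=
        Real.exp_le_exp.2 (aux_log_ge u hu)
    _ = 1 + u := Real.exp_log (by linarith)

lemma aux_inv_sqrt_le {s : ℝ} (hs : 0 ≤ s) :
    (Real.sqrt (1 + 2 * s))⁻¹ ≤ Real.exp (s ^ 2 - s) := by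
  have h2s : (0 : ℝ) < 1 + 2 * s := by linarith
  have key : Real.exp (s - s ^ 2) ≤ Real.sqrt (1 + 2 * s) := by
    rw [show s - s ^ 2 = (2 * s - (2 * s) ^ 2 / 2) / 2 by ring]
    have := aux_exp_le (2 * s) (by linarith)
    calc Real.exp ((2 * s - (2 * s) ^ 2 / 2) / 2)
        = Real.sqrt (Real.exp (2 * s - (2 * s) ^ 2 / 2)) := by
          symm
          rw [show Real.exp (2 * s - (2 * s) ^ 2 / 2)
              = Real.exp ((2 * s - (2 * s) ^ 2 / 2) / 2) ^ 2 by
            rw [← Real.exp_nat_mul]; ring_nf]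
          exact Real.sqrt_sq (Real.exp_nonneg _)
    _ ≤ Real.sqrt (1 + 2 * s) := Real.sqrt_le_sqrt this
  calc (Real.sqrt (1 + 2 * s))⁻¹ ≤ (Real.exp (s - s ^ 2))⁻¹ := by
        apply inv_anti₀ (Real.exp_pos _) key
    _ = Real.exp (s ^ 2 - s) := by rw [← Real.exp_neg]; ring_nf


lemma aux_gauss_integral (m : ℝ) {s : ℝ} (hs : 0 ≤ s) :
    ∫ x, Real.exp (-s * x ^ 2) ∂(gaussianReal m 1) =
      (Real.sqrt (1 + 2 * s))⁻¹ * Real.exp (-s * m ^ 2 / (1 + 2 * s)) := by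
  have h2s : (0 : ℝ) < 1 + 2 * s := by linarith
  rw [gaussianReal_of_var_ne_zero m one_ne_zero]
  have hpdf : gaussianPDF m 1 = fun x => ((gaussianPDFReal m 1 x).toNNReal : ENNReal) := rfl
  rw [hpdf, integral_withDensity_eq_integral_smul
    ((measurable_gaussianPDFReal m 1).real_toNNReal) _]
  have heq : ∀ x : ℝ, (gaussianPDFReal m 1 x).toNNReal • Real.exp (-s * x ^ 2)
      = ((Real.sqrt (2 * π))⁻¹ * Real.exp (-s * m ^ 2 / (1 + 2 * s)))
        * Real.exp (-((1 + 2 * s) / 2) * (x - m / (1 + 2 * s)) ^ 2) := by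
    intro x
    rw [NNReal.smul_def, Real.coe_toNNReal _ (gaussianPDFReal_nonneg m 1 x)]
    simp only [gaussianPDFReal, NNReal.coe_one, mul_one]
    rw [smul_eq_mul, mul_assoc, mul_assoc, ← Real.exp_add, ← Real.exp_add]
    congr 1
    congr 1
    field_simp
    ring
  simp_rw [heq]
  rw [integral_const_mul, integral_sub_right_eq_self
    (fun a => Real.exp (-((1 + 2 * s) / 2) * a ^ 2)) (m / (1 + 2 * s)),
    integral_gaussian]
  have hb : π / ((1 + 2 * s) / 2) = (2 * π) * (1 + 2 * s)⁻¹ := by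
    field_simp
  have hc : Real.sqrt ((2 * π) * (1 + 2 * s)⁻¹)
      = Real.sqrt (2 * π) * (Real.sqrt (1 + 2 * s))⁻¹ := by
    rw [Real.sqrt_mul (by positivity : (0:ℝ) ≤ 2 * π), Real.sqrt_inv]
  rw [hb, hc]
  have h1 : Real.sqrt (2 * π) ≠ 0 := by positivity
  have h2 : Real.sqrt (1 + 2 * s) ≠ 0 := by positivity
  field_simp


/-- (Birgé) Lower tail bound for the noncentral chi-square distribution: if
`Z₁, …, Z_D` are independent Gaussians with `Z i ~ N(μ i, 1)`, `X = ∑ (Z i)²` and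
`λ = ∑ (μ i)²`, then for `0 < c < D + λ`,
`Pr[X ≤ c] ≤ exp(−(D + λ − c)² / (4(D + 2λ)))`. -/
theorem stmt_1 {Ω : Type*} [MeasurableSpace Ω] (P : Measure Ω) [IsProbabilityMeasure P]
    (D : ℕ) (hD : 1 ≤ D) (μ : Fin D → ℝ) (Z : Fin D → Ω → ℝ)
    (hmeas : ∀ i, Measurable (Z i))
    (hindep : iIndepFun Z P)
    (hlaw : ∀ i, Measure.map (Z i) P = gaussianReal (μ i) 1)
    (lam : ℝ) (hlam : lam = ∑ i, μ i ^ 2)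
    (c : ℝ) (hc0 : 0 < c) (hc : c < D + lam) :
    P {ω | ∑ i, Z i ω ^ 2 ≤ c} ≤
      ENNReal.ofReal (Real.exp (-(D + lam - c) ^ 2 / (4 * (D + 2 * lam)))) := by
  have hlam0 : 0 ≤ lam := by
    rw [hlam]; exact Finset.sum_nonneg fun i _ => sq_nonneg _
  have hDpos : (0 : ℝ) < D := by exact_mod_cast hD
  have hB : (0 : ℝ) < D + 2 * lam := by linarith
  have hA : (0 : ℝ) < D + lam - c := by linarith
  set s : ℝ := (D + lam - c) / (2 * (D + 2 * lam)) with hsdef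
  have hs : 0 < s := div_pos hA (by linarith)
  have h2s : (0 : ℝ) < 1 + 2 * s := by linarith
  set X : Fin D → Ω → ℝ := fun i ω => Z i ω ^ 2 with hX
  have hXmeas : ∀ i, Measurable (X i) := fun i => (hmeas i).pow_const 2
  have hXindep : iIndepFun X P :=
    hindep.comp (fun _ => fun x : ℝ => x ^ 2) fun _ => measurable_id.pow_const 2
  have hint : ∀ i, Integrable (fun ω => Real.exp (-s * X i ω)) P := by
    intro i
    refine Integrable.mono' (integrable_const 1)
      (((hXmeas i).const_mul (-s)).exp.aestronglyMeasurable) ?_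
    filter_upwards with ω
    rw [Real.norm_eq_abs, abs_of_pos (Real.exp_pos _)]
    have h0 : (0 : ℝ) ≤ Z i ω ^ 2 := sq_nonneg _
    have : -s * X i ω ≤ 0 := by
      simp only [hX]; nlinarith
    calc Real.exp (-s * X i ω) ≤ Real.exp 0 := Real.exp_le_exp.2 this
      _ = 1 := Real.exp_zero
  have hchern := measure_le_le_exp_mul_mgf (X := ∑ i, X i) (μ := P) c
    (neg_nonpos.2 hs.le)
    (hXindep.integrable_exp_mul_sum hXmeas fun i _ => hint i)
  have hmgf : ∀ i, mgf (X i) P (-s)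
      = (Real.sqrt (1 + 2 * s))⁻¹ * Real.exp (-s * μ i ^ 2 / (1 + 2 * s)) := by
    intro i
    have h1 : mgf (X i) P (-s) = ∫ ω, Real.exp (-s * Z i ω ^ 2) ∂P := rfl
    have h2 : ∫ ω, Real.exp (-s * Z i ω ^ 2) ∂P
        = ∫ x, Real.exp (-s * x ^ 2) ∂(Measure.map (Z i) P) := by
      rw [integral_map (hmeas i).aemeasurable
        (by exact (((measurable_id.pow_const 2).const_mul (-s)).exp).aestronglyMeasurable)]
    rw [h1, h2, hlaw i, aux_gauss_integral (μ i) hs.le]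
  have hprod : mgf (∑ i, X i) P (-s)
      = ((Real.sqrt (1 + 2 * s))⁻¹) ^ D * Real.exp (-s * lam / (1 + 2 * s)) := by
    rw [hXindep.mgf_sum hXmeas]
    simp_rw [hmgf]
    rw [Finset.prod_mul_distrib, Finset.prod_const, Finset.card_univ, Fintype.card_fin,
      ← Real.exp_sum]
    congr 1
    rw [hlam, ← Finset.sum_div, ← Finset.mul_sum]
  have hset : {ω | ∑ i, Z i ω ^ 2 ≤ c} = {ω | (∑ i, X i) ω ≤ c} := by
    ext ω; simp [hX]
  rw [hset, ← ENNReal.ofReal_toReal (measure_ne_top P _)]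
  apply ENNReal.ofReal_le_ofReal
  refine hchern.trans ?_
  rw [hprod]
  have h1 : ((Real.sqrt (1 + 2 * s))⁻¹) ^ D ≤ Real.exp ((D : ℝ) * (s ^ 2 - s)) := by
    calc ((Real.sqrt (1 + 2 * s))⁻¹) ^ D ≤ (Real.exp (s ^ 2 - s)) ^ D :=
          pow_le_pow_left₀ (by positivity) (aux_inv_sqrt_le hs.le) D
      _ = Real.exp ((D : ℝ) * (s ^ 2 - s)) := (Real.exp_nat_mul _ D).symm
  have h3 : Real.exp (-s * lam / (1 + 2 * s)) ≤ Real.exp (-s * lam * (1 - 2 * s)) := by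
    apply Real.exp_le_exp.2
    rw [div_le_iff₀ h2s]
    nlinarith [mul_nonneg (mul_nonneg hs.le hlam0) (sq_nonneg s)]
  calc Real.exp (-(-s) * c)
        * (((Real.sqrt (1 + 2 * s))⁻¹) ^ D * Real.exp (-s * lam / (1 + 2 * s)))
      ≤ Real.exp (-(-s) * c)
        * (Real.exp ((D : ℝ) * (s ^ 2 - s)) * Real.exp (-s * lam * (1 - 2 * s))) := by
        have e1 : (0 : ℝ) ≤ ((Real.sqrt (1 + 2 * s))⁻¹) ^ D := by positivity
        gcongr
    _ = Real.exp (-(-s) * c + ((D : ℝ) * (s ^ 2 - s) + -s * lam * (1 - 2 * s))) := by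
        rw [Real.exp_add, Real.exp_add]
    _ = Real.exp (-(D + lam - c) ^ 2 / (4 * (D + 2 * lam))) := by
        congr 1
        rw [hsdef]
        field_simp
        ring
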